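/- In any double algebra, the elements of $L$ and $R$ commute in the vertical algebra: for all $a, b \in A$, $\Phi_L(a)\circ\Phi_R(b) = \Phi_R(b)\circ\Phi_L(a)$, and both sides equal $a\star e\star b$. -/
import Mathlib


/-- A double algebra over a commutative ring `k`: a `k`-module `A` with two
associative unital bilinear multiplications, the vertical `vmul` (written `∘` in the
paper, unit `e`) and the horizontal `hmul` (written `⋆`, unit `i`), satisfying
axioms A1–A8 of Szlachányi's Definition 1.1. -/
structure DoubleAlgebra (k : Type*) (A : Type*) [CommRing k] [AddCommGroup A]
    [Module k A] where
  vmul : A →ₗ[k] A →ₗ[k] A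
  hmul : A →ₗ[k] A →ₗ[k] A
  e : A
  i : A
  vmul_assoc : ∀ a b c, vmul (vmul a b) c = vmul a (vmul b c)
  hmul_assoc : ∀ a b c, hmul (hmul a b) c = hmul a (hmul b c)
  vmul_e : ∀ a, vmul a e = a
  e_vmul : ∀ a, vmul e a = a
  hmul_i : ∀ a, hmul a i = a
  i_hmul : ∀ a, hmul i a = a
  A1 : ∀ a b, vmul (hmul a e) b = hmul (vmul (hmul a e) i) b
  A2 : ∀ a b, vmul a (hmul b e) = hmul (vmul i (hmul b e)) a
  A3 : ∀ a b, hmul (vmul a i) b = vmul (hmul (vmul a i) e) b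
  A4 : ∀ a b, hmul a (vmul b i) = vmul (hmul e (vmul b i)) a
  A5 : ∀ a b, vmul a (hmul e b) = hmul a (vmul i (hmul e b))
  A6 : ∀ a b, vmul (hmul e a) b = hmul b (vmul (hmul e a) i)
  A7 : ∀ a b, hmul a (vmul i b) = vmul a (hmul e (vmul i b))
  A8 : ∀ a b, hmul (vmul i a) b = vmul b (hmul (vmul i a) e)

variable {k A : Type*} [CommRing k] [AddCommGroup A] [Module k A]

/-- `Φ_L(a) = a ⋆ e`. -/
def DoubleAlgebra.PhiL (D : DoubleAlgebra k A) (a : A) : A := D.hmul a D.e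
/-- `Φ_R(a) = e ⋆ a`. -/
def DoubleAlgebra.PhiR (D : DoubleAlgebra k A) (a : A) : A := D.hmul D.e a
/-- `Φ_B(a) = a ∘ i`. -/
def DoubleAlgebra.PhiB (D : DoubleAlgebra k A) (a : A) : A := D.vmul a D.i
/-- `Φ_T(a) = i ∘ a`. -/
def DoubleAlgebra.PhiT (D : DoubleAlgebra k A) (a : A) : A := D.vmul D.i a

/-- elements of `L` and `R` commute vertically, and
`Φ_L(a)∘Φ_R(b) = a ⋆ e ⋆ b`. -/
theorem stmt5 (D : DoubleAlgebra k A) (a b : A) :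
    D.vmul (D.PhiL a) (D.PhiR b) = D.vmul (D.PhiR b) (D.PhiL a) ∧
    D.vmul (D.PhiL a) (D.PhiR b) = D.hmul (D.hmul a D.e) b := by
  constructor
  · -- both sides equal a⋆e⋆b
    have h1 : D.vmul (D.hmul a D.e) (D.hmul D.e b)
        = D.hmul (D.hmul a D.e) b := by
      have := D.A1 a (D.hmul D.e b)
      rw [this, ← D.hmul_assoc, ← D.A1 a D.e, D.vmul_e]
    have h2 : D.vmul (D.hmul D.e b) (D.hmul a D.e)
        = D.hmul (D.hmul a D.e) b := by
      have := D.A6 b (D.hmul a D.e)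
      rw [this, D.hmul_assoc, ← D.A6 b D.e, D.vmul_e, ← D.hmul_assoc]
    simp only [DoubleAlgebra.PhiL, DoubleAlgebra.PhiR, h1, h2]
  · simp only [DoubleAlgebra.PhiL, DoubleAlgebra.PhiR]
    have := D.A1 a (D.hmul D.e b)
    rw [this, ← D.hmul_assoc, ← D.A1 a D.e, D.vmul_e]
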